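/- KD mana is nonincreasing under partial trace: for a density matrix ρ on n qubits, M(Tr₁ρ) ≤ M(ρ), where Tr₁ is the partial trace over the first qubit, and the KD distribution of Tr₁ρ satisfies Q_{g,χ}(Tr₁ρ) = Σ_{g',χ'} Q_{(g',g),(χ',χ)}(ρ). -/

import Mathlib

open scoped BigOperators
open Matrix Kronecker
open scoped ComplexOrder

noncomputable section

/-- The group `G = (ℤ/2ℤ)^n` indexing the computational basis of `(ℂ²)^{⊗n}`. -/
abbrev G (n : ℕ) : Type := Fin n → ZMod 2

/-- Mod-2 dot product. -/
def dot {n : ℕ} (u v : G n) : ZMod 2 := ∑ j, u j * v j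

/-- `(-1)^x` for `x : ZMod 2`. -/
def sgn (x : ZMod 2) : ℂ := if x = 0 then 1 else -1

/-- Normalization constant `2^{-n/2}`. -/
def nrm (n : ℕ) : ℂ := ((Real.sqrt 2 ^ n : ℝ) : ℂ)⁻¹

/-- Amplitude `⟨a|χ⟩ = (-1)^{χ·a} 2^{-n/2}` of the Fourier basis state `|χ⟩`. -/
def chi {n : ℕ} (χ a : G n) : ℂ := sgn (dot χ a) * nrm n

/-- KD phase-space point operator `B_{g,χ} = |χ⟩⟨χ|g⟩⟨g|`. -/
def B {n : ℕ} (g χ : G n) : Matrix (G n) (G n) ℂ :=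
  Matrix.of fun a b => chi χ a * (starRingEnd ℂ) (chi χ g) * (if b = g then 1 else 0)

/-- Real Pauli string `P_{u,v} = ∏_j Z_j^{v_j} X_j^{u_j}`:
it maps `|b⟩` to `(-1)^{v·(b+u)} |b+u⟩`. -/
def P {n : ℕ} (u v : G n) : Matrix (G n) (G n) ℂ :=
  Matrix.of fun a b => if a = b + u then sgn (dot v a) else 0

/-- The `(ℤ/2ℤ)^n` Kirkwood–Dirac distribution `Q_{g,χ}(ρ) = Tr(B_{g,χ} ρ)`. -/
def Q {n : ℕ} (ρ : Matrix (G n) (G n) ℂ) (g χ : G n) : ℂ := (B g χ * ρ).trace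


/-- KD mana `M(rho) = log sum_{g,chi} |Q_{g,chi}(rho)|`. -/
def mana {n : ℕ} (ρ : Matrix (G n) (G n) ℂ) : ℝ :=
  Real.log (∑ g : G n, ∑ χ : G n, ‖Q ρ g χ‖)

/-- Partial trace over the first (single-qubit) tensor factor. -/
def ptr₁ {n : ℕ} (ρ : Matrix (G 1 × G n) (G 1 × G n) ℂ) : Matrix (G n) (G n) ℂ :=
  Matrix.of fun a b => ∑ x : G 1, ρ (x, a) (x, b)

lemma sgn_zero : sgn 0 = 1 := rfl

lemma sgn_add (x y : ZMod 2) : sgn (x + y) = sgn x * sgn y := by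
  have h : ∀ z : ZMod 2, z = 0 ∨ z = 1 := by decide
  rcases h x with rfl | rfl <;> rcases h y with rfl | rfl <;>
    simp [sgn, show (1:ZMod 2) + 1 = 0 from rfl, show (1:ZMod 2) ≠ 0 from by decide]

lemma sgn_finset_sum {ι : Type*} (s : Finset ι) (f : ι → ZMod 2) :
    sgn (∑ j ∈ s, f j) = ∏ j ∈ s, sgn (f j) := by
  induction s using Finset.cons_induction with
  | empty => simp [sgn_zero]
  | cons a s ha ih => simp [Finset.sum_cons, Finset.prod_cons, sgn_add, ih]

lemma conj_sgn (x : ZMod 2) : (starRingEnd ℂ) (sgn x) = sgn x := by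
  unfold sgn; split_ifs <;> simp

lemma conj_nrm (n : ℕ) : (starRingEnd ℂ) (nrm n) = nrm n := by
  simp [nrm, ← Complex.ofReal_inv]

lemma dot_add_right {n : ℕ} (u a b : G n) : dot u (a + b) = dot u a + dot u b := by
  simp [dot, mul_add, Finset.sum_add_distrib]

lemma sum_zmod2 (f : ZMod 2 → ℂ) : ∑ x : ZMod 2, f x = f 0 + f 1 := by
  rw [show (Finset.univ : Finset (ZMod 2)) = {0, 1} from by decide]
  simp

lemma char_sum {n : ℕ} (c : G n) :
    ∑ χ : G n, sgn (dot χ c) = if c = 0 then (2 : ℂ) ^ n else 0 := by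
  have h1 : ∀ χ : G n, sgn (dot χ c) = ∏ j, sgn (χ j * c j) := fun χ =>
    sgn_finset_sum _ _
  simp_rw [h1]
  have key := Fintype.prod_sum (ι := Fin n) (κ := fun _ => ZMod 2)
    (fun j (y : ZMod 2) => sgn (y * c j))
  rw [← key]
  by_cases hc : c = 0
  · subst hc
    simp [sgn_zero, sum_zmod2]
  · obtain ⟨j, hj⟩ := Function.ne_iff.mp hc
    rw [if_neg hc]
    refine Finset.prod_eq_zero (Finset.mem_univ j) ?_
    have hcj : c j = 1 := by
      have h : c j ≠ 0 := by simpa using hj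
      revert h; generalize c j = x; revert x; decide
    rw [hcj, sum_zmod2]
    simp [sgn]

lemma nrm_sq (n : ℕ) : nrm n * nrm n * (2 : ℂ) ^ n = 1 := by
  have h2 : (Real.sqrt 2) ^ 2 = 2 := Real.sq_sqrt (by norm_num)
  have : nrm n * nrm n = ((2 : ℂ) ^ n)⁻¹ := by
    rw [nrm, ← mul_inv]
    congr 1
    push_cast
    rw [← pow_add, ← two_mul, pow_mul, ← Complex.ofReal_pow, h2]
    norm_num
  rw [this, inv_mul_cancel₀ (by positivity)]

lemma add_self_G {n : ℕ} (v : G n) : v + v = 0 :=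
  funext fun j => by rw [Pi.add_apply]; exact CharTwo.add_self_eq_zero _

lemma sum_B (n : ℕ) : ∑ g : G n, ∑ χ : G n, B g χ = (1 : Matrix (G n) (G n) ℂ) := by
  ext a b
  simp only [Matrix.sum_apply, B, Matrix.of_apply, mul_ite, mul_one, mul_zero]
  rw [Finset.sum_comm]
  simp only [Finset.sum_ite_eq, Finset.mem_univ, if_true]
  have : ∀ χ : G n, chi χ a * (starRingEnd ℂ) (chi χ b)
      = nrm n * nrm n * sgn (dot χ (a + b)) := by
    intro χ
    simp only [chi, _root_.map_mul, conj_sgn, conj_nrm, dot_add_right, sgn_add]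
    ring
  simp_rw [this, ← Finset.mul_sum, char_sum]
  by_cases hab : a = b
  · subst hab
    simp [add_self_G, nrm_sq, Matrix.one_apply]
  · have : a + b ≠ 0 := by
      intro h
      exact hab (by rw [← add_zero a, ← add_self_G b, ← add_assoc, h, zero_add])
    simp [this, Matrix.one_apply, hab]

lemma sum_Q_eq_trace {n : ℕ} (ρ : Matrix (G n) (G n) ℂ) :
    ∑ g : G n, ∑ χ : G n, Q ρ g χ = ρ.trace := by
  simp only [Q, ← Matrix.trace_sum, ← Matrix.sum_mul]
  rw [sum_B, Matrix.one_mul]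

lemma trace_ptr₁ {n : ℕ} (ρ : Matrix (G 1 × G n) (G 1 × G n) ℂ) :
    (ptr₁ ρ).trace = ρ.trace := by
  simp only [Matrix.trace, Matrix.diag, ptr₁, Matrix.of_apply]
  rw [Fintype.sum_prod_type, Finset.sum_comm]

lemma kron_sum_eq {n : ℕ} (g χ : G n) :
    ∑ g' : G 1, ∑ χ' : G 1, (B g' χ' ⊗ₖ B g χ) =
      (1 : Matrix (G 1) (G 1) ℂ) ⊗ₖ B g χ := by
  ext ⟨i₁, i₂⟩ ⟨j₁, j₂⟩
  simp only [Matrix.sum_apply, Matrix.kroneckerMap_apply, ← Finset.sum_mul]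
  congr 1
  rw [← sum_B 1]
  simp [Matrix.sum_apply]

lemma trace_kron_one {n : ℕ} (ρ : Matrix (G 1 × G n) (G 1 × G n) ℂ) (g χ : G n) :
    (((1 : Matrix (G 1) (G 1) ℂ) ⊗ₖ B g χ) * ρ).trace = (B g χ * ptr₁ ρ).trace := by
  simp only [Matrix.trace, Matrix.diag, Matrix.mul_apply, ptr₁, Matrix.of_apply,
    Matrix.kroneckerMap_apply]
  rw [Fintype.sum_prod_type]
  simp only [Matrix.one_apply, ite_mul, one_mul, zero_mul]
  have collapse : ∀ (x : G 1) (F : G 1 → G n → ℂ),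
      (∑ y : G 1, ∑ b : G n, if x = y then F y b else 0) = ∑ b : G n, F x b := by
    intro x F
    rw [Finset.sum_comm]
    simp
  simp_rw [Fintype.sum_prod_type, collapse, Finset.mul_sum]
  rw [Finset.sum_comm]
  refine Finset.sum_congr rfl fun a _ => ?_
  rw [Finset.sum_comm]

lemma marginal {n : ℕ} (ρ : Matrix (G 1 × G n) (G 1 × G n) ℂ) (g χ : G n) :
    Q (ptr₁ ρ) g χ = ∑ g' : G 1, ∑ χ' : G 1, ((B g' χ' ⊗ₖ B g χ) * ρ).trace := by
  rw [Q, ← trace_kron_one, ← kron_sum_eq, Matrix.sum_mul, Matrix.trace_sum]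
  exact Finset.sum_congr rfl fun g' _ => by rw [Matrix.sum_mul, Matrix.trace_sum]


/-- the KD distribution of the reduced state is the marginal of the KD
distribution over the first qubit's indices, and the KD mana is nonincreasing under
the partial trace. -/
theorem mana_partial_trace {n : ℕ} (ρ : Matrix (G 1 × G n) (G 1 × G n) ℂ)
    (hρ : ρ.PosSemidef) (hτ : ρ.trace = 1) :
    (∀ g χ : G n, Q (ptr₁ ρ) g χ =
        ∑ g' : G 1, ∑ χ' : G 1, ((B g' χ' ⊗ₖ B g χ) * ρ).trace) ∧
    mana (ptr₁ ρ) ≤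
      Real.log (∑ g' : G 1, ∑ g : G n, ∑ χ' : G 1, ∑ χ : G n,
        ‖((B g' χ' ⊗ₖ B g χ) * ρ).trace‖) := by
  refine ⟨marginal ρ, ?_⟩
  have hpos : (1 : ℝ) ≤ ∑ g : G n, ∑ χ : G n, ‖Q (ptr₁ ρ) g χ‖ := by
    have h1 : ‖∑ g : G n, ∑ χ : G n, Q (ptr₁ ρ) g χ‖ = 1 := by
      rw [sum_Q_eq_trace, trace_ptr₁, hτ]; simp
    calc (1 : ℝ) = ‖∑ g : G n, ∑ χ : G n, Q (ptr₁ ρ) g χ‖ := h1.symm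
      _ ≤ ∑ g : G n, ∑ χ : G n, ‖Q (ptr₁ ρ) g χ‖ := by
          refine (norm_sum_le _ _).trans ?_
          exact Finset.sum_le_sum fun g _ => norm_sum_le _ _
  have hle : ∑ g : G n, ∑ χ : G n, ‖Q (ptr₁ ρ) g χ‖ ≤
      ∑ g' : G 1, ∑ g : G n, ∑ χ' : G 1, ∑ χ : G n,
        ‖((B g' χ' ⊗ₖ B g χ) * ρ).trace‖ := by
    have step1 : ∑ g : G n, ∑ χ : G n, ‖Q (ptr₁ ρ) g χ‖ ≤
        ∑ g : G n, ∑ χ : G n, ∑ g' : G 1, ∑ χ' : G 1,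
          ‖((B g' χ' ⊗ₖ B g χ) * ρ).trace‖ := by
      refine Finset.sum_le_sum fun g _ => Finset.sum_le_sum fun χ _ => ?_
      rw [marginal ρ g χ]
      refine (norm_sum_le _ _).trans ?_
      exact Finset.sum_le_sum fun g' _ => norm_sum_le _ _
    refine step1.trans (le_of_eq ?_)
    calc ∑ g : G n, ∑ χ : G n, ∑ g' : G 1, ∑ χ' : G 1,
            ‖((B g' χ' ⊗ₖ B g χ) * ρ).trace‖
        = ∑ g : G n, ∑ g' : G 1, ∑ χ : G n, ∑ χ' : G 1,
            ‖((B g' χ' ⊗ₖ B g χ) * ρ).trace‖ :=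
          Finset.sum_congr rfl fun g _ => Finset.sum_comm
      _ = ∑ g' : G 1, ∑ g : G n, ∑ χ : G n, ∑ χ' : G 1,
            ‖((B g' χ' ⊗ₖ B g χ) * ρ).trace‖ := Finset.sum_comm
      _ = ∑ g' : G 1, ∑ g : G n, ∑ χ' : G 1, ∑ χ : G n,
            ‖((B g' χ' ⊗ₖ B g χ) * ρ).trace‖ :=
          Finset.sum_congr rfl fun g' _ =>
            Finset.sum_congr rfl fun g _ => Finset.sum_comm
  have h0 : (0 : ℝ) < ∑ g : G n, ∑ χ : G n, ‖Q (ptr₁ ρ) g χ‖ :=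
    lt_of_lt_of_le one_pos hpos
  exact Real.log_le_log h0 hle
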